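/- For nonzero polynomials a, b, q ∈ ℂ[s], the ideal ⟨lcm(a,b)(s), q(t)⟩ of ℂ[s,t] equals the intersection of the ideals ⟨a(s), q(t)⟩ and ⟨b(s), q(t)⟩. -/

import Mathlib

open MvPolynomial

noncomputable def e1 : MvPolynomial (Fin 1) ℂ ≃ₐ[ℂ] Polynomial ℂ :=
  (MvPolynomial.renameEquiv ℂ (Equiv.equivPUnit.{1,1} (Fin 1))).trans
    (MvPolynomial.pUnitAlgEquiv ℂ)

noncomputable def e2 : MvPolynomial (Fin 2) ℂ ≃ₐ[ℂ] Polynomial (Polynomial ℂ) :=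
  (MvPolynomial.finSuccEquiv ℂ 1).trans (Polynomial.mapAlgEquiv e1)

lemma e2_X0 : e2 (X 0) = Polynomial.X := by
  simp [e2, MvPolynomial.finSuccEquiv_X_zero, Polynomial.coe_mapAlgEquiv]

lemma e2_X1 : e2 (X 1) = Polynomial.C Polynomial.X := by
  have h : (X 1 : MvPolynomial (Fin 2) ℂ) = X (Fin.succ 0) := rfl
  rw [e2, AlgEquiv.trans_apply, h, MvPolynomial.finSuccEquiv_X_succ]
  rw [Polynomial.coe_mapAlgEquiv, Polynomial.map_C]
  congr 1
  simp [e1]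

lemma aeval_X_poly (d : Polynomial ℂ) :
    Polynomial.aeval (Polynomial.X : Polynomial (Polynomial ℂ)) d = d.map Polynomial.C := by
  rw [Polynomial.aeval_def, ← Polynomial.eval₂_C_X (p := d.map Polynomial.C),
    Polynomial.eval₂_map]
  rfl

lemma e2_aeval_X0 (d : Polynomial ℂ) :
    e2 (Polynomial.aeval (X 0 : MvPolynomial (Fin 2) ℂ) d) = d.map Polynomial.C := by
  have h := Polynomial.aeval_algHom_apply
    (e2 : MvPolynomial (Fin 2) ℂ →ₐ[ℂ] Polynomial (Polynomial ℂ)) (X 0) d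
  simp only [AlgEquiv.coe_algHom] at h
  rw [← h, e2_X0, aeval_X_poly]

lemma e2_aeval_X1 (q : Polynomial ℂ) :
    e2 (Polynomial.aeval (X 1 : MvPolynomial (Fin 2) ℂ) q) = Polynomial.C q := by
  have h := Polynomial.aeval_algHom_apply
    (e2 : MvPolynomial (Fin 2) ℂ →ₐ[ℂ] Polynomial (Polynomial ℂ)) (X 1) q
  simp only [AlgEquiv.coe_algHom] at h
  rw [← h, e2_X1]
  rw [show (Polynomial.C Polynomial.X : Polynomial (Polynomial ℂ)) =
    Polynomial.CAlgHom (R := ℂ) Polynomial.X from rfl,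
    Polynomial.aeval_algHom_apply, Polynomial.aeval_X_left_apply]
  rfl

lemma cancelPoly (d q : Polynomial ℂ) (hd : d ≠ 0) (g : Polynomial (Polynomial ℂ))
    (h : Polynomial.C q ∣ d.map Polynomial.C * g) : Polynomial.C q ∣ g := by
  have hprim : (d.map (Polynomial.C : ℂ →+* Polynomial ℂ)).IsPrimitive := by
    intro r hr
    rw [Polynomial.C_dvd_iff_dvd_coeff] at hr
    have h2 := hr d.natDegree
    rw [Polynomial.coeff_map] at h2
    exact isUnit_of_dvd_unit h2
      (Polynomial.isUnit_C.mpr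
        (isUnit_iff_ne_zero.mpr (Polynomial.leadingCoeff_ne_zero.mpr hd)))
  rw [← Polynomial.dvd_content_iff_C_dvd] at h ⊢
  rwa [Polynomial.content_mul, Polynomial.isPrimitive_iff_content_eq_one.mp hprim,
    one_mul] at h

lemma cancelMv (d q : Polynomial ℂ) (hd : d ≠ 0) (g : MvPolynomial (Fin 2) ℂ)
    (h : Polynomial.aeval (X 1 : MvPolynomial (Fin 2) ℂ) q ∣
      Polynomial.aeval (X 0 : MvPolynomial (Fin 2) ℂ) d * g) :
    Polynomial.aeval (X 1 : MvPolynomial (Fin 2) ℂ) q ∣ g := by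
  have h' := map_dvd e2 h
  rw [map_mul, e2_aeval_X0, e2_aeval_X1] at h'
  obtain ⟨c, hc⟩ := cancelPoly d q hd _ h'
  refine ⟨e2.symm c, ?_⟩
  apply e2.injective
  rw [map_mul, e2_aeval_X1, AlgEquiv.apply_symm_apply, hc]


/-- For nonzero `a, b, q ∈ ℂ[s]`, the ideal `⟨lcm(a,b)(s), q(t)⟩` of
`ℂ[s,t]` equals `⟨a(s), q(t)⟩ ∩ ⟨b(s), q(t)⟩`. -/
theorem stmt3 (a b q : Polynomial ℂ) (ha : a ≠ 0) (hb : b ≠ 0) (hq : q ≠ 0) :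
    Ideal.span ({Polynomial.aeval (X 0 : MvPolynomial (Fin 2) ℂ) (lcm a b),
        Polynomial.aeval (X 1 : MvPolynomial (Fin 2) ℂ) q} : Set (MvPolynomial (Fin 2) ℂ)) =
      Ideal.span ({Polynomial.aeval (X 0 : MvPolynomial (Fin 2) ℂ) a,
          Polynomial.aeval (X 1 : MvPolynomial (Fin 2) ℂ) q} : Set (MvPolynomial (Fin 2) ℂ)) ⊓
        Ideal.span ({Polynomial.aeval (X 0 : MvPolynomial (Fin 2) ℂ) b,
          Polynomial.aeval (X 1 : MvPolynomial (Fin 2) ℂ) q} : Set (MvPolynomial (Fin 2) ℂ)) := by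
  set A : Polynomial ℂ →ₐ[ℂ] MvPolynomial (Fin 2) ℂ :=
    Polynomial.aeval (X 0 : MvPolynomial (Fin 2) ℂ) with hA
  set Q : MvPolynomial (Fin 2) ℂ := Polynomial.aeval (X 1 : MvPolynomial (Fin 2) ℂ) q with hQ
  have key : ∀ p r : Polynomial ℂ, p ∣ r →
      Ideal.span ({A r, Q} : Set (MvPolynomial (Fin 2) ℂ)) ≤
        Ideal.span ({A p, Q} : Set (MvPolynomial (Fin 2) ℂ)) := by
    rintro p r ⟨c, rfl⟩
    rw [Ideal.span_le]
    rintro x hx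
    rcases hx with rfl | rfl
    · rw [map_mul]
      exact Ideal.mul_mem_right _ _ (Ideal.subset_span (Set.mem_insert _ _))
    · exact Ideal.subset_span (Set.mem_insert_of_mem _ rfl)
  refine le_antisymm (le_inf (key a _ (dvd_lcm_left a b)) (key b _ (dvd_lcm_right a b))) ?_
  rintro f ⟨hf1, hf2⟩
  rw [SetLike.mem_coe, Ideal.mem_span_pair] at hf1 hf2
  rw [Ideal.mem_span_pair]
  obtain ⟨x, y, hxy⟩ := hf1
  obtain ⟨z, w, hzw⟩ := hf2
  have hd : gcd a b ≠ 0 := gcd_ne_zero_of_left ha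
  set a' := a / gcd a b with ha'
  set b' := b / gcd a b with hb'
  have haa : gcd a b * a' = a := EuclideanDomain.mul_div_cancel' hd (gcd_dvd_left a b)
  have hbb : gcd a b * b' = b := EuclideanDomain.mul_div_cancel' hd (gcd_dvd_right a b)
  obtain ⟨u, v, huv⟩ := isCoprime_div_gcd_div_gcd (p := a) hb
  have hlcm : lcm a b ∣ a * b' := lcm_dvd ⟨b', rfl⟩ ⟨a', by linear_combination a' * hbb - b' * haa⟩
  obtain ⟨c, hc⟩ := hlcm
  have hAa : A a = A (gcd a b) * A a' := by rw [← map_mul, haa]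
  have hAb : A b = A (gcd a b) * A b' := by rw [← map_mul, hbb]
  have hdvd : Q ∣ A (gcd a b) * (x * A a' - z * A b') := by
    refine ⟨w - y, ?_⟩
    linear_combination hxy - hzw - x * hAa + z * hAb
  obtain ⟨h, hh⟩ := cancelMv (gcd a b) q hd _ hdvd
  have huvA : A u * A a' + A v * A b' = 1 := by
    rw [← map_mul, ← map_mul, ← map_add, huv, map_one]
  have hcA : A a * A b' = A (lcm a b) * A c := by
    rw [← map_mul, ← map_mul, hc]
  refine ⟨A c * (A u * z + A v * x), A a * A u * h + y, ?_⟩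
  linear_combination hxy - (A u * z + A v * x) * hcA - (A a * A u) * hh + (A a * x) * huvA
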